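/- Let H ⊆ ℝ^X be a real-valued function class such that the L2 loss class L²_H = {(x,y) ↦ (h(x) − y)² : h ∈ H} is bounded by M (i.e., |h(x) − y| ≤ M on the relevant domain). Then fat_γ(L²_H) ≤ 8·fat_{γ/(2M)}(H) for every γ > 0. -/

import Mathlib

/-- `F` γ-shatters some set of `m` points (with an arbitrary shift `r`). -/
def FatShatters {X : Type*} (F : Set (X → ℝ)) (γ : ℝ) (m : ℕ) : Prop :=
  ∃ x : Fin m → X, Function.Injective x ∧ ∃ r : Fin m → ℝ,
    ∀ b : Fin m → Bool, ∃ f ∈ F, ∀ i,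
      (b i = true → r i + γ ≤ f (x i)) ∧ (b i = false → f (x i) ≤ r i - γ)

/-- `F` γ-shatters some set of `m` points at zero (shift constrained to `0`). -/
def FatShatters0 {X : Type*} (F : Set (X → ℝ)) (γ : ℝ) (m : ℕ) : Prop :=
  ∃ x : Fin m → X, Function.Injective x ∧
    ∀ b : Fin m → Bool, ∃ f ∈ F, ∀ i,
      (b i = true → γ ≤ f (x i)) ∧ (b i = false → f (x i) ≤ -γ)

/-- γ-fat-shattering dimension. -/
noncomputable def fatDim {X : Type*} (F : Set (X → ℝ)) (γ : ℝ) : ℕ :=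
  sSup {m | FatShatters F γ m}

/-- γ-fat-shattering dimension at zero. -/
noncomputable def fatDim0 {X : Type*} (F : Set (X → ℝ)) (γ : ℝ) : ℕ :=
  sSup {m | FatShatters0 F γ m}

/-- The `L²` loss class of `H` on `X × Y`, where `Y` embeds in `ℝ` via `yval`. -/
def l2LossClass {X Y : Type*} (H : Set (X → ℝ)) (yval : Y → ℝ) : Set (X × Y → ℝ) :=
  (fun h => fun p => (h p.1 - yval p.2) ^ 2) '' H

open Finset in
lemma count_aux (d m : ℕ) (h : 8*d+1 ≤ m) :
    ∑ k ∈ Finset.Iic d, (2*m).choose k < 2^m := by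
  have hd2m : d ≤ 2*m := by omega
  set P : ℕ := 8^(2*m-d) with hP
  have hPpos : 0 < P := Nat.pow_pos (by norm_num)
  have key : (∑ k ∈ Iic d, (2*m).choose k) * P ≤ 9^(2*m) := by
    calc (∑ k ∈ Iic d, (2*m).choose k) * P
        = ∑ k ∈ Iic d, (2*m).choose k * 8^(2*m-d) := by rw [Finset.sum_mul]
      _ ≤ ∑ k ∈ Iic d, (2*m).choose k * 8^(2*m-k) := by
          refine Finset.sum_le_sum fun k hk => ?_
          have hk' : k ≤ d := Finset.mem_Iic.1 hk
          exact Nat.mul_le_mul_left _ (Nat.pow_le_pow_right (by norm_num) (by omega))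
      _ ≤ ∑ k ∈ Finset.range (2*m+1), (2*m).choose k * 8^(2*m-k) := by
          refine Finset.sum_le_sum_of_subset ?_
          intro k hk
          simp only [Finset.mem_Iic, Finset.mem_range] at *
          omega
      _ = 9^(2*m) := by
          rw [show (9:ℕ) = 1+8 by norm_num, add_pow]
          refine Finset.sum_congr rfl fun k hk => ?_
          push_cast
          ring
  have hexp : 9^(2*m) < 2^m * P := by
    have h9 : (9:ℕ)^(2*m) = 3^(4*m) := by
      rw [show (9:ℕ) = 3^2 by norm_num, ← pow_mul]
      ring_nf
    have hP2 : 2^m * P = 2^(m + 3*(2*m-d)) := by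
      rw [hP, show (8:ℕ) = 2^3 by norm_num, ← pow_mul, ← pow_add]
    rw [h9, hP2]
    have h8 : (3^(4*m))^8 < (2^(m + 3*(2*m-d)))^8 := by
      rw [← pow_mul, ← pow_mul]
      calc 3^(4*m*8) = (3^32)^m := by rw [← pow_mul]; ring_nf
        _ < (2^53)^m := Nat.pow_lt_pow_left (by norm_num) (by omega)
        _ = 2^(53*m) := by rw [← pow_mul]
        _ ≤ 2^((m + 3*(2*m-d))*8) := Nat.pow_le_pow_right (by norm_num) (by omega)
    by_contra hle
    push_neg at hle
    exact absurd h8 (not_lt.2 (Nat.pow_le_pow_left hle 8))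
  exact Nat.lt_of_mul_lt_mul_right (lt_of_le_of_lt key hexp)

theorem fat_l2LossClass_le {X Y : Type*} (H : Set (X → ℝ)) (yval : Y → ℝ)
    (M γ : ℝ) (hM : 0 < M) (hγ : 0 < γ)
    (hbound : ∀ h ∈ H, ∀ (x : X) (y : Y), |h x - yval y| ≤ M)
    (hbdd : BddAbove {m | FatShatters H (γ / (2 * M)) m}) :
    ∀ m : ℕ, FatShatters (l2LossClass H yval) γ m →
      m ≤ 8 * fatDim H (γ / (2 * M)) := by

  intro m hfs
  classical
  set γ' : ℝ := γ / (2 * M) with hγ'def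
  have hM2 : (0:ℝ) < 2*M := by linarith
  have hγ' : 0 < γ' := div_pos hγ hM2
  have hγeq : γ = 2*M*γ' := by rw [hγ'def]; field_simp
  obtain ⟨x, hxinj, r, hr⟩ := hfs
  -- choose witnesses in H
  have hw : ∀ b : Fin m → Bool, ∃ h, h ∈ H ∧ ∀ i,
      (b i = true → r i + γ ≤ (h (x i).1 - yval (x i).2)^2) ∧
      (b i = false → (h (x i).1 - yval (x i).2)^2 ≤ r i - γ) := by
    intro b
    obtain ⟨f, hfH, hf⟩ := hr b
    obtain ⟨h, hh, rfl⟩ := hfH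
    exact ⟨h, hh, fun i => hf i⟩
  choose w hwH hw2 using hw
  set v : Fin m → ℝ := fun i => yval (x i).2 with hv
  set g : (Fin m → Bool) → Fin m → ℝ := fun b i => w b (x i).1 - v i with hg
  set s : Fin m → ℝ := fun i => Real.sqrt (r i) with hs
  have hgM : ∀ b i, |g b i| ≤ M := fun b i => hbound _ (hwH b) (x i).1 (x i).2
  have hrγ : ∀ i, γ ≤ r i := by
    intro i
    have h1 := (hw2 (fun _ => false) i).2 rfl
    nlinarith [sq_nonneg (w (fun _ => false) (x i).1 - yval (x i).2)]
  have hrM : ∀ i, r i + γ ≤ M^2 := by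
    intro i
    have h1 := (hw2 (fun _ => true) i).1 rfl
    have h2 := hgM (fun _ => true) i
    have h3 : (g (fun _ => true) i)^2 ≤ M^2 := by
      have := abs_nonneg (g (fun _ => true) i)
      nlinarith [sq_abs (g (fun _ => true) i)]
    simp only [hg, hv] at h3
    linarith
  have hsnn : ∀ i, 0 ≤ s i := fun i => Real.sqrt_nonneg _
  have hssq : ∀ i, (s i)^2 = r i := fun i => Real.sq_sqrt (le_trans hγ.le (hrγ i))
  have hsM : ∀ i, s i ≤ M := by
    intro i
    have h1 : (s i)^2 ≤ M^2 := by rw [hssq]; nlinarith [hrγ i, hrM i]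
    nlinarith [hsnn i]
  have hsγ' : ∀ i, γ' ≤ s i := by
    intro i
    have h1 : 2*M*γ' ≤ (s i)^2 := by rw [hssq]; linarith [hrγ i]
    nlinarith [hsnn i, hsM i]
  -- key abs facts
  have hT : ∀ b i, b i = true → s i + γ' ≤ |g b i| := by
    intro b i hb
    have h1 := (hw2 b i).1 hb
    have hA : Real.sqrt (r i + γ) ≤ |g b i| := by
      rw [← Real.sqrt_sq_eq_abs]
      apply Real.sqrt_le_sqrt
      simpa [hg, hv] using h1
    have hAnn : 0 ≤ Real.sqrt (r i + γ) := Real.sqrt_nonneg _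
    have hAsq : (Real.sqrt (r i + γ))^2 = r i + γ :=
      Real.sq_sqrt (by nlinarith [hrγ i])
    have hAM : Real.sqrt (r i + γ) ≤ M := by nlinarith [hrM i]
    have hAB : s i ≤ Real.sqrt (r i + γ) := by nlinarith [hssq i, hsnn i]
    have hdiff : (0:ℝ) ≤ 2*M - (Real.sqrt (r i + γ) + s i) := by linarith [hsM i]
    have : s i + γ' ≤ Real.sqrt (r i + γ) := by
      nlinarith [hssq i, mul_nonneg (sub_nonneg.2 hAB) hdiff, hM2]
    linarith
  have hF : ∀ b i, b i = false → |g b i| ≤ s i - γ' := by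
    intro b i hb
    have h1 := (hw2 b i).2 hb
    have hC : |g b i| ≤ Real.sqrt (r i - γ) := by
      rw [← Real.sqrt_sq_eq_abs]
      apply Real.sqrt_le_sqrt
      simpa [hg, hv] using h1
    have hCnn : 0 ≤ Real.sqrt (r i - γ) := Real.sqrt_nonneg _
    have hCsq : (Real.sqrt (r i - γ))^2 = r i - γ :=
      Real.sq_sqrt (by linarith [hrγ i])
    have hCs : Real.sqrt (r i - γ) ≤ s i := by nlinarith [hssq i, hsnn i]
    have hdiff : (0:ℝ) ≤ 2*M - (s i + Real.sqrt (r i - γ)) := by linarith [hsM i]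
    have : Real.sqrt (r i - γ) ≤ s i - γ' := by
      nlinarith [hssq i, mul_nonneg (sub_nonneg.2 hCs) hdiff, hM2]
    linarith
  -- the finset family
  set A : (Fin m → Bool) → Finset (Fin m × Bool) := fun b =>
    Finset.univ.filter (fun p => if p.2 then s p.1 + γ' ≤ g b p.1
      else g b p.1 ≤ -(s p.1 + γ')) with hA
  have hmemT : ∀ b i, ((i, true) ∈ A b ↔ s i + γ' ≤ g b i) := by
    intro b i; simp [hA]
  have hmemF : ∀ b i, ((i, false) ∈ A b ↔ g b i ≤ -(s i + γ')) := by
    intro b i; simp [hA]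
  have hnotboth : ∀ b i, ¬((i, true) ∈ A b ∧ (i, false) ∈ A b) := by
    rintro b i ⟨h1, h2⟩
    rw [hmemT] at h1; rw [hmemF] at h2
    have := hsγ' i
    linarith
  have hlow : ∀ b i, (i, true) ∉ A b → g b i ≤ s i - γ' := by
    intro b i hni
    rw [hmemT] at hni
    push_neg at hni
    cases hb : b i with
    | false => exact (abs_le.1 (hF b i hb)).2
    | true =>
      have := hT b i hb
      rcases le_abs.1 this with h1 | h1
      · linarith
      · have := hsγ' i; linarith
  have hhigh : ∀ b i, (i, false) ∉ A b → -(s i) + γ' ≤ g b i := by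
    intro b i hni
    rw [hmemF] at hni
    push_neg at hni
    cases hb : b i with
    | false => have := (abs_le.1 (hF b i hb)).1; linarith
    | true =>
      have := hT b i hb
      rcases le_abs.1 this with h1 | h1
      · have := hsγ' i; linarith
      · linarith
  have hAinj : Function.Injective A := by
    intro b b' hEq
    funext i
    by_contra hne
    -- wlog-ish : case on values
    have key : ∀ c c' : Fin m → Bool, A c = A c' → c i = true → c' i = false → False := by
      intro c c' hcc hc hc'
      have h1 := hT c i hc
      have h2 := hF c' i hc'
      have := hsγ' i
      rcases le_abs.1 h1 with h3 | h3
      · have h4 : (i, true) ∈ A c := (hmemT c i).2 h3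
        rw [hcc] at h4
        rw [hmemT] at h4
        have := (abs_le.1 h2).2
        linarith
      · have h4 : (i, false) ∈ A c := (hmemF c i).2 (by linarith)
        rw [hcc] at h4
        rw [hmemF] at h4
        have := (abs_le.1 h2).1
        linarith
    cases hb : b i with
    | true =>
      cases hb' : b' i with
      | true => exact hne (hb.trans hb'.symm)
      | false => exact key b b' hEq hb hb'
    | false =>
      cases hb' : b' i with
      | false => exact hne (hb.trans hb'.symm)
      | true => exact key b' b hEq.symm hb' hb
  set 𝒜 : Finset (Finset (Fin m × Bool)) := Finset.univ.image A with h𝒜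
  have hcard : 𝒜.card = 2^m := by
    rw [h𝒜, Finset.card_image_of_injective _ hAinj, Finset.card_univ]
    simp
  -- shattered sets give fat-shattering of H
  have hshat : ∀ S : Finset (Fin m × Bool), 𝒜.Shatters S → FatShatters H γ' S.card := by
    intro S hS
    set n := S.card with hn
    set e : {p // p ∈ S} ≃ Fin n := S.equivFin with he
    set q : Fin n → {p // p ∈ S} := fun j => e.symm j with hq
    set z : Fin n → X := fun j => (x (q j).val.1).1 with hz
    set ρ : Fin n → ℝ := fun j =>
      (if (q j).val.2 then s ((q j).val.1) else -(s ((q j).val.1))) + v ((q j).val.1) with hρ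
    have hcore : ∀ c : Fin n → Bool, ∃ h ∈ H, ∀ j,
        (c j = true → ρ j + γ' ≤ h (z j)) ∧ (c j = false → h (z j) ≤ ρ j - γ') := by
      intro c
      set t : Finset (Fin m × Bool) :=
        (S.attach.filter (fun p => c (e p) = p.val.2)).image Subtype.val with ht
      have htS : t ⊆ S := by
        intro p hp
        simp only [ht, Finset.mem_image, Finset.mem_filter, Finset.mem_attach, true_and] at hp
        obtain ⟨p', _, rfl⟩ := hp
        exact p'.2
      obtain ⟨u, hu, hut⟩ := hS htS
      obtain ⟨b, -, rfl⟩ := Finset.mem_image.1 hu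
      have hiff : ∀ p : {p // p ∈ S}, (p.val ∈ A b ↔ c (e p) = p.val.2) := by
        intro p
        constructor
        · intro hp
          have : p.val ∈ t := by
            rw [← hut]
            exact Finset.mem_inter.2 ⟨p.2, hp⟩
          simp only [ht, Finset.mem_image, Finset.mem_filter, Finset.mem_attach, true_and] at this
          obtain ⟨p', hc, hpp⟩ := this
          have : p' = p := Subtype.ext hpp
          rwa [this] at hc
        · intro hc
          have hpt : p.val ∈ t := by
            simp only [ht, Finset.mem_image, Finset.mem_filter, Finset.mem_attach, true_and]
            exact ⟨p, hc, rfl⟩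
          rw [← hut] at hpt
          exact (Finset.mem_inter.1 hpt).2
      refine ⟨w b, hwH b, fun j => ?_⟩
      have hej : e (q j) = j := e.apply_symm_apply j
      have hiffj : ((q j).val ∈ A b ↔ c j = (q j).val.2) := by
        rw [hiff (q j), hej]
      have hwz : w b (z j) = g b ((q j).val.1) + v ((q j).val.1) := by
        simp [hz, hg]
      cases hp2 : (q j).val.2 with
      | true =>
        have hρj : ρ j = s ((q j).val.1) + v ((q j).val.1) := by
          simp [hρ, hp2]
        constructor
        · intro hc
          have hmem : (q j).val ∈ A b := hiffj.2 (by rw [hc, hp2])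
          have : ((q j).val.1, true) ∈ A b := by
            rwa [show ((q j).val.1, true) = (q j).val by rw [← hp2]]
          rw [hmemT] at this
          rw [hwz, hρj]; linarith
        · intro hc
          have hnmem : (q j).val ∉ A b := fun hm => by
            have := hiffj.1 hm; rw [hc, hp2] at this; simp at this
          have : ((q j).val.1, true) ∉ A b := by
            rwa [show ((q j).val.1, true) = (q j).val by rw [← hp2]]
          have := hlow b ((q j).val.1) this
          rw [hwz, hρj]; linarith
      | false =>
        have hρj : ρ j = -(s ((q j).val.1)) + v ((q j).val.1) := by
          simp [hρ, hp2]
        constructor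
        · intro hc
          have hnmem : (q j).val ∉ A b := fun hm => by
            have := hiffj.1 hm; rw [hc, hp2] at this; simp at this
          have : ((q j).val.1, false) ∉ A b := by
            rwa [show ((q j).val.1, false) = (q j).val by rw [← hp2]]
          have := hhigh b ((q j).val.1) this
          rw [hwz, hρj]; linarith
        · intro hc
          have hmem : (q j).val ∈ A b := hiffj.2 (by rw [hc, hp2])
          have : ((q j).val.1, false) ∈ A b := by
            rwa [show ((q j).val.1, false) = (q j).val by rw [← hp2]]
          rw [hmemF] at this
          rw [hwz, hρj]; linarith
    have hzinj : Function.Injective z := by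
      intro j j' hzz
      by_contra hne
      obtain ⟨h1, hh1, hc1⟩ := hcore (fun k => if k = j then true else false)
      obtain ⟨h2, hh2, hc2⟩ := hcore (fun k => if k = j' then true else false)
      have e1 := (hc1 j).1 (by simp)
      have e2 := (hc1 j').2 (by simp [Ne.symm hne])
      have e3 := (hc2 j').1 (by simp)
      have e4 := (hc2 j).2 (by simp [hne])
      rw [hzz] at e1 e4
      linarith
    exact ⟨z, hzinj, ρ, hcore⟩
  have hle : ∀ S : Finset (Fin m × Bool), 𝒜.Shatters S → S.card ≤ fatDim H γ' :=
    fun S hS => le_csSup hbdd (hshat S hS)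
  have hvc : 𝒜.vcDim ≤ fatDim H γ' := by
    have hne : 𝒜.shatterer.Nonempty := by
      have h1 : 𝒜.Nonempty := ⟨A (fun _ => false), Finset.mem_image_of_mem _ (Finset.mem_univ _)⟩
      exact ⟨∅, Finset.mem_shatterer.2 (Finset.shatters_empty.2 h1)⟩
    obtain ⟨S, hSmem, hSeq⟩ := Finset.exists_mem_eq_sup _ hne Finset.card
    rw [Finset.vcDim, hSeq]
    exact hle S (Finset.mem_shatterer.1 hSmem)
  have hchain : 2^m ≤ ∑ k ∈ Finset.Iic (fatDim H γ'), (2*m).choose k := by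
    calc 2^m = 𝒜.card := hcard.symm
      _ ≤ 𝒜.shatterer.card := Finset.card_le_card_shatterer _
      _ ≤ ∑ k ∈ Finset.Iic 𝒜.vcDim, (Fintype.card (Fin m × Bool)).choose k :=
          Finset.card_shatterer_le_sum_vcDim
      _ = ∑ k ∈ Finset.Iic 𝒜.vcDim, (2*m).choose k := by
          congr 1
          simp [Fintype.card_prod, Nat.mul_comm]
      _ ≤ ∑ k ∈ Finset.Iic (fatDim H γ'), (2*m).choose k := by
          refine Finset.sum_le_sum_of_subset ?_
          exact Finset.Iic_subset_Iic.2 hvc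
  by_contra hcon
  push_neg at hcon
  have h81 : 8 * fatDim H γ' + 1 ≤ m := hcon
  exact absurd hchain (not_le.2 (count_aux _ _ h81))
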